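/- Define the sequence (γ_k) by γ₀ = 1/2 and γ_{k+1} = 1/(2π(k+1)γ_k), and for each integer d ≥ 2 set F(d) = (2/d) · γ_{(d-1)²} · γ_{d-1}^{-(d-1)}. Then log F(d) = Θ(d log d); that is, there exist constants c₁, c₂ > 0 and an integer D such that for all d ≥ D, c₁ · d · log d ≤ log F(d) ≤ c₂ · d · log d. -/

import Mathlib

/-- The sequence `γ` of Buchta–Müller–Tichy: `γ₀ = 1/2`, `γ_{k+1} = 1/(2π(k+1)γ_k)`. -/
noncomputable def gammaSeq : ℕ → ℝ
  | 0 => 1 / 2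
  | k + 1 => 1 / (2 * Real.pi * (k + 1) * gammaSeq k)

/-- The Buchta–Müller–Tichy constant `F(d) = (2/d) γ_{(d-1)²} γ_{d-1}^{-(d-1)}`. -/
noncomputable def BMTconst (d : ℕ) : ℝ :=
  (2 / d) * gammaSeq ((d - 1) ^ 2) * gammaSeq (d - 1) ^ (-((d : ℤ) - 1))

lemma gammaSeq_pos : ∀ k, 0 < gammaSeq k
  | 0 => by norm_num [gammaSeq]
  | k + 1 => by
    have h := gammaSeq_pos k
    have hπ := Real.pi_pos
    simp only [gammaSeq]
    positivity

lemma gammaSeq_one : gammaSeq 1 = 1 / Real.pi := by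
  have hπ := Real.pi_ne_zero
  simp only [show gammaSeq 1 = 1 / (2 * Real.pi * ((0:ℕ) + 1) * gammaSeq 0) from rfl, gammaSeq]
  push_cast
  field_simp
  norm_num

lemma gammaSeq_step (k : ℕ) : gammaSeq (k + 2) = ((k:ℝ) + 1) / ((k:ℝ) + 2) * gammaSeq k := by
  have hk := (gammaSeq_pos k).ne'
  have hπ := Real.pi_ne_zero
  show gammaSeq (k + 1 + 1) = _
  simp only [gammaSeq]
  push_cast
  field_simp
  ring

lemma gammaSeq_two : gammaSeq 2 = 1 / 4 := by
  have h := gammaSeq_step 0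
  norm_num at h
  rw [h]
  norm_num [gammaSeq]

lemma step_up (x c : ℝ) (hc : 0 ≤ c) (hx : x ^ 2 ≤ 1 / (4 * (c + 1))) :
    ((c + 1) / (c + 2) * x) ^ 2 ≤ 1 / (4 * (c + 3)) := by
  have h1 : (0:ℝ) < c + 1 := by linarith
  have hx' : x ^ 2 * (4 * (c + 1)) ≤ 1 := by
    rw [← le_div_iff₀ (by positivity)]; exact hx
  rw [mul_pow, div_pow, div_mul_eq_mul_div, div_le_div_iff₀ (by positivity) (by positivity)]
  nlinarith [mul_le_mul_of_nonneg_left hx' (by positivity : (0:ℝ) ≤ (c + 1) * (c + 3))]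

lemma step_lo (x c : ℝ) (hc : 1 ≤ c) (hx : 1 / (Real.pi ^ 2 * c) ≤ x ^ 2) :
    1 / (Real.pi ^ 2 * (c + 2)) ≤ ((c + 1) / (c + 2) * x) ^ 2 := by
  have hπ := Real.pi_pos
  have h1 : (0:ℝ) < c := by linarith
  have h2 : (0:ℝ) < c + 2 := by linarith
  have key : 1 / (Real.pi ^ 2 * (c + 2)) ≤ 1 / (Real.pi ^ 2 * c) * ((c + 1) / (c + 2)) ^ 2 := by
    rw [div_pow, div_mul_div_comm, one_mul, div_le_div_iff₀ (by positivity) (by positivity)]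
    have hp : (0:ℝ) < Real.pi ^ 2 * (c + 2) := by positivity
    nlinarith [hp]
  calc 1 / (Real.pi ^ 2 * (c + 2)) ≤ 1 / (Real.pi ^ 2 * c) * ((c + 1) / (c + 2)) ^ 2 := key
    _ ≤ x ^ 2 * ((c + 1) / (c + 2)) ^ 2 := by
        exact mul_le_mul_of_nonneg_right hx (by positivity)
    _ = ((c + 1) / (c + 2) * x) ^ 2 := by ring

lemma gammaSeq_sq_le : ∀ k : ℕ, gammaSeq k ^ 2 ≤ 1 / (4 * ((k:ℝ) + 1))
  | 0 => by norm_num [gammaSeq]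
  | 1 => by
      rw [gammaSeq_one]
      have h3 := Real.pi_gt_three
      rw [div_pow, one_pow, div_le_div_iff₀ (by positivity) (by norm_num)]
      push_cast
      nlinarith
  | (k + 2) => by
      have h := step_up (gammaSeq k) k (Nat.cast_nonneg k) (gammaSeq_sq_le k)
      rw [gammaSeq_step]
      push_cast
      ring_nf at h ⊢
      linarith

lemma gammaSeq_sq_ge : ∀ k : ℕ, 1 ≤ k → 1 / (Real.pi ^ 2 * k) ≤ gammaSeq k ^ 2
  | 0 => by omega
  | 1 => fun _ => by
      rw [gammaSeq_one]
      have hπ := Real.pi_ne_zero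
      rw [div_pow, one_pow]
      norm_num
  | 2 => fun _ => by
      rw [gammaSeq_two]
      have h3 := Real.pi_gt_three
      push_cast
      rw [show ((1:ℝ)/4)^2 = 1/16 by norm_num, div_le_div_iff₀ (by positivity) (by norm_num)]
      nlinarith
  | (k + 3) => fun _ => by
      have h := step_lo (gammaSeq (k + 1)) ((k:ℝ) + 1) (by push_cast; linarith [Nat.cast_nonneg (α := ℝ) k])
        (by have := gammaSeq_sq_ge (k + 1) (by omega); push_cast at this ⊢; linarith)
      have hs : gammaSeq (k + 3) = (((k:ℝ) + 1) + 1) / (((k:ℝ) + 1) + 2) * gammaSeq (k + 1) := by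
        have := gammaSeq_step (k + 1)
        push_cast at this
        rw [this]
      rw [hs]
      push_cast
      ring_nf at h ⊢
      linarith

lemma log_gammaSeq_le (k : ℕ) (hk : 1 ≤ k) :
    Real.log (gammaSeq k) ≤ -Real.log 2 - (1/2) * Real.log k := by
  have hpos := gammaSeq_pos k
  have hkR : (1:ℝ) ≤ (k:ℝ) := by exact_mod_cast hk
  have h0 : (0:ℝ) < k := by linarith
  have h : gammaSeq k ^ 2 ≤ 1 / (4 * k) := by
    refine le_trans (gammaSeq_sq_le k) ?_
    apply div_le_div_of_nonneg_left one_pos.le (by positivity)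
    linarith
  have hlog := Real.log_le_log (by positivity) h
  rw [Real.log_pow] at hlog
  have : Real.log (1 / (4 * (k:ℝ))) = -(2 * Real.log 2 + Real.log k) := by
    rw [one_div, Real.log_inv, Real.log_mul (by norm_num) (by positivity),
      show (4:ℝ) = 2 ^ 2 by norm_num, Real.log_pow]
    push_cast
    ring
  rw [this] at hlog
  push_cast at hlog
  linarith

lemma log_gammaSeq_ge (k : ℕ) (hk : 1 ≤ k) :
    -Real.log Real.pi - (1/2) * Real.log k ≤ Real.log (gammaSeq k) := by
  have hpos := gammaSeq_pos k
  have hπ := Real.pi_pos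
  have hkR : (1:ℝ) ≤ (k:ℝ) := by exact_mod_cast hk
  have h0 : (0:ℝ) < k := by linarith
  have hlog := Real.log_le_log (by positivity) (gammaSeq_sq_ge k hk)
  rw [Real.log_pow] at hlog
  have : Real.log (1 / (Real.pi ^ 2 * (k:ℝ))) = -(2 * Real.log Real.pi + Real.log k) := by
    rw [one_div, Real.log_inv, Real.log_mul (by positivity) (by positivity), Real.log_pow]
    push_cast
    ring
  rw [this] at hlog
  push_cast at hlog
  linarith

/-- `log F(d) = Θ(d log d)`: there are constants `c₁, c₂ > 0` and a threshold
`D` such that `c₁ d log d ≤ log F(d) ≤ c₂ d log d` for all `d ≥ D`. -/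
theorem log_BMTconst_theta :
    ∃ c₁ c₂ : ℝ, 0 < c₁ ∧ 0 < c₂ ∧ ∃ D : ℕ, ∀ d : ℕ, D ≤ d →
      c₁ * d * Real.log d ≤ Real.log (BMTconst d) ∧
        Real.log (BMTconst d) ≤ c₂ * d * Real.log d := by
  refine ⟨1/16, 3/2, by norm_num, by norm_num, 48, fun d hd => ?_⟩
  set n := d - 1 with hn_def
  have hn47 : 47 ≤ n := by omega
  have hn1 : 1 ≤ n := by omega
  have hn21 : 1 ≤ n ^ 2 := Nat.one_le_pow _ _ (by omega)
  have hxd : (48:ℝ) ≤ (d:ℝ) := by exact_mod_cast hd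
  have hcast : ((n:ℕ):ℝ) = (d:ℝ) - 1 := by
    rw [hn_def, Nat.cast_sub (by omega)]; norm_num
  have hπ := Real.pi_pos
  have hπ4 := Real.pi_le_four
  have hgn := gammaSeq_pos n
  have hgn2 := gammaSeq_pos (n ^ 2)
  -- decompose the log
  have hlogz : Real.log (gammaSeq n ^ (-((d:ℤ) - 1))) =
      -(((d:ℝ) - 1)) * Real.log (gammaSeq n) := by
    rw [Real.log_zpow]; push_cast; ring
  have hBMT : Real.log (BMTconst d) = Real.log 2 - Real.log d +
      Real.log (gammaSeq (n ^ 2)) - ((d:ℝ) - 1) * Real.log (gammaSeq n) := by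
    unfold BMTconst
    rw [← hn_def, Real.log_mul (mul_ne_zero (by positivity) hgn2.ne')
        (zpow_ne_zero _ hgn.ne'),
      Real.log_mul (by positivity) hgn2.ne', Real.log_div (by norm_num) (by positivity),
      hlogz]
    ring
  rw [hBMT]
  -- log facts
  have hL : (0:ℝ) < Real.log d := Real.log_pos (by linarith)
  have hm0 : (0:ℝ) ≤ Real.log n := Real.log_nonneg (by exact_mod_cast hn1)
  have hT0 : (0:ℝ) ≤ Real.log 2 := Real.log_nonneg (by norm_num)
  have hTL : Real.log 2 ≤ Real.log d := Real.log_le_log (by norm_num) (by linarith)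
  have hmL : Real.log n ≤ Real.log d :=
    Real.log_le_log (by rw [hcast]; linarith) (by rw [hcast]; linarith)
  have hPL : Real.log Real.pi ≤ Real.log d := Real.log_le_log hπ (by linarith)
  have hm_ge : Real.log d ≤ 2 * Real.log n := by
    have hdn : (d:ℝ) ≤ ((n:ℕ):ℝ) ^ 2 := by rw [hcast]; nlinarith
    calc Real.log d ≤ Real.log (((n:ℕ):ℝ) ^ 2) :=
          Real.log_le_log (by linarith) hdn
      _ = 2 * Real.log n := by rw [Real.log_pow]; push_cast; ring
  have hln2 : Real.log ((n ^ 2 : ℕ) : ℝ) = 2 * Real.log n := by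
    push_cast
    rw [Real.log_pow]
    push_cast; ring
  have A_le : Real.log (gammaSeq (n ^ 2)) ≤ -Real.log 2 - Real.log n := by
    have := log_gammaSeq_le (n ^ 2) hn21
    rw [hln2] at this; linarith
  have A_ge : -Real.log Real.pi - Real.log n ≤ Real.log (gammaSeq (n ^ 2)) := by
    have := log_gammaSeq_ge (n ^ 2) hn21
    rw [hln2] at this; linarith
  have B_le := log_gammaSeq_le n hn1
  have B_ge := log_gammaSeq_ge n hn1
  have hx1 : (0:ℝ) ≤ (d:ℝ) - 1 := by linarith
  constructor
  · -- lower bound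
    have hB : ((d:ℝ) - 1) * Real.log (gammaSeq n) ≤
        ((d:ℝ) - 1) * (-(1/2) * Real.log n) :=
      mul_le_mul_of_nonneg_left (by linarith) hx1
    have hm2 : ((d:ℝ) - 1) * ((1/2) * Real.log d) ≤ ((d:ℝ) - 1) * Real.log n :=
      mul_le_mul_of_nonneg_left (by linarith) hx1
    have hint : (0:ℝ) ≤ (3 * (d:ℝ) - 52) * Real.log d :=
      mul_nonneg (by linarith) hL.le
    linarith [hB, hm2, hint, A_ge, hPL, hmL, hT0, hL]
  · -- upper bound
    have hB2 : ((d:ℝ) - 1) * (-Real.log Real.pi - (1/2) * Real.log n) ≤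
        ((d:ℝ) - 1) * Real.log (gammaSeq n) :=
      mul_le_mul_of_nonneg_left B_ge hx1
    have hP2 : ((d:ℝ) - 1) * (Real.log Real.pi + (1/2) * Real.log n) ≤
        ((d:ℝ) - 1) * ((3/2) * Real.log d) :=
      mul_le_mul_of_nonneg_left (by linarith) hx1
    linarith [hB2, hP2, A_le, hT0, hTL, hm0, hL]
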